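/- Let A be a commutative topological ring, m ∈ ℕ, and let M be a submodule of A^m that is a direct summand (i.e. there is a submodule M₁ of A^m with A^m = M ⊕ M₁). Endow M with the subspace topology inherited from the product topology of A^m. Then for every topological A-module N, every A-linear map f : M → N is continuous. -/

import Mathlib

/-- Let `A` be a commutative topological ring and `M` a direct summand of `A^m`,
endowed with the subspace topology from the product topology of `A^m`. Then every
`A`-linear map from `M` to any topological `A`-module `N` is continuous. -/
theorem linearMap_continuous_of_isCompl_summand
    (A : Type*) [CommRing A] [TopologicalSpace A] [IsTopologicalRing A]
    (m : ℕ) (M M₁ : Submodule A (Fin m → A)) (hcompl : IsCompl M M₁)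
    (N : Type*) [AddCommGroup N] [Module A N] [TopologicalSpace N]
    [ContinuousAdd N] [ContinuousSMul A N]
    (f : M →ₗ[A] N) : Continuous f := by
  set F : (Fin m → A) →ₗ[A] N := f ∘ₗ (M.linearProjOfIsCompl M₁ hcompl) with hF
  have hFcont : Continuous F := by
    have hrep : ∀ x : Fin m → A, F x = ∑ i, x i • F (fun j => if i = j then 1 else 0) :=
      fun x => LinearMap.pi_apply_eq_sum_univ F x
    have : Continuous fun x : Fin m → A => ∑ i, x i • F (fun j => if i = j then 1 else 0) := by
      apply continuous_finset_sum
      intro i _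
      exact (continuous_apply i).smul continuous_const
    exact (continuous_congr (fun x => (hrep x).symm)).mp this
  have : ∀ x : M, f x = F (x : Fin m → A) := by
    intro x
    simp [hF, Submodule.linearProjOfIsCompl, Submodule.linearProjOfIsCompl_apply_left]
  exact (continuous_congr (fun x => (this x).symm)).mp (hFcont.comp continuous_subtype_val)
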